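/- Let f, g : ℝ≥0 → ℝ satisfy f(0) = g(0) = 0 and be bounded on every compact interval, and define the one-dimensional Skorohod reflections Γf(t) := f(t) + sup_{s ∈ [0,t]} max(−f(s), 0) and Γg(t) := g(t) + sup_{s ∈ [0,t]} max(−g(s), 0). Then for every t ≥ 0, sup_{s ∈ [0,t]} |Γf(s) − Γg(s)| ≤ 2 sup_{s ∈ [0,t]} |f(s) − g(s)|. -/

import Mathlib

open Real Set NNReal

noncomputable section

/-- The one-dimensional Skorohod reflection of a path `f` with `f 0 = 0`:
`(Γ f) t = f t + sup_{s ∈ [0, t]} max (-f s) 0`. -/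
def skorohodReflection (f : ℝ≥0 → ℝ) (t : ℝ≥0) : ℝ :=
  f t + sSup ((fun s => max (-f s) 0) '' Set.Icc 0 t)

/-- Lipschitz continuity of the one-dimensional Skorohod reflection map:
for paths `f, g` with `f 0 = g 0 = 0` that are bounded on compacts,
`sup_{s ∈ [0,t]} |Γ f s - Γ g s| ≤ 2 sup_{s ∈ [0,t]} |f s - g s|` for every `t ≥ 0`. -/
theorem skorohodReflection_lipschitz
    (f g : ℝ≥0 → ℝ) (hf0 : f 0 = 0) (hg0 : g 0 = 0)
    (hfb : ∀ T : ℝ≥0, ∃ C : ℝ, ∀ s ≤ T, |f s| ≤ C)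
    (hgb : ∀ T : ℝ≥0, ∃ C : ℝ, ∀ s ≤ T, |g s| ≤ C) :
    ∀ t : ℝ≥0,
      sSup ((fun s => |skorohodReflection f s - skorohodReflection g s|) '' Set.Icc 0 t) ≤
        2 * sSup ((fun s => |f s - g s|) '' Set.Icc 0 t) := by
  intro t
  obtain ⟨Cf, hCf⟩ := hfb t
  obtain ⟨Cg, hCg⟩ := hgb t
  set M := sSup ((fun s => |f s - g s|) '' Set.Icc 0 t) with hMdef
  have hbddM : BddAbove ((fun s => |f s - g s|) '' Set.Icc 0 t) := by
    refine ⟨Cf + Cg, ?_⟩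
    rintro x ⟨s, hs, rfl⟩
    calc |f s - g s| ≤ |f s| + |g s| := abs_sub _ _
      _ ≤ Cf + Cg := add_le_add (hCf s hs.2) (hCg s hs.2)
  have h0t : (0 : ℝ≥0) ∈ Set.Icc 0 t := ⟨le_rfl, (zero_le : (0 : ℝ≥0) ≤ t)⟩
  have hM0 : 0 ≤ M := by
    have h1 : |f 0 - g 0| ≤ M :=
      le_csSup hbddM (Set.mem_image_of_mem _ h0t)
    have : |f 0 - g 0| = 0 := by rw [hf0, hg0]; simp
    linarith
  have hMem : ∀ u ∈ Set.Icc (0 : ℝ≥0) t, |f u - g u| ≤ M := fun u hu =>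
    le_csSup hbddM (Set.mem_image_of_mem _ hu)
  -- boundedness of the running-max sets
  have hbddf : ∀ s : ℝ≥0, s ≤ t →
      BddAbove ((fun u => max (-f u) 0) '' Set.Icc 0 s) := by
    intro s hs
    refine ⟨Cf, ?_⟩
    rintro x ⟨u, hu, rfl⟩
    have h1 : |f u| ≤ Cf := hCf u (le_trans hu.2 hs)
    have h2 : -f u ≤ Cf := by
      have := neg_abs_le (f u); linarith
    have h3 : (0 : ℝ) ≤ Cf := le_trans (abs_nonneg _) h1
    exact max_le h2 h3
  have hbddg : ∀ s : ℝ≥0, s ≤ t →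
      BddAbove ((fun u => max (-g u) 0) '' Set.Icc 0 s) := by
    intro s hs
    refine ⟨Cg, ?_⟩
    rintro x ⟨u, hu, rfl⟩
    have h1 : |g u| ≤ Cg := hCg u (le_trans hu.2 hs)
    have h2 : -g u ≤ Cg := by
      have := neg_abs_le (g u); linarith
    have h3 : (0 : ℝ) ≤ Cg := le_trans (abs_nonneg _) h1
    exact max_le h2 h3
  have key : ∀ s ∈ Set.Icc (0 : ℝ≥0) t,
      |skorohodReflection f s - skorohodReflection g s| ≤ 2 * M := by
    intro s hs
    set Sf := sSup ((fun u => max (-f u) 0) '' Set.Icc 0 s) with hSf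
    set Sg := sSup ((fun u => max (-g u) 0) '' Set.Icc 0 s) with hSg
    have h0s : (0 : ℝ≥0) ∈ Set.Icc 0 s := ⟨le_rfl, hs.1.trans hs.2 |>.trans (le_refl t) |> fun _ => (zero_le : (0 : ℝ≥0) ≤ s)⟩
    have hSf0 : 0 ≤ Sf := by
      have : max (-f 0) 0 ≤ Sf :=
        le_csSup (hbddf s hs.2) (Set.mem_image_of_mem _ h0s)
      simp [hf0] at this; linarith [this]
    have hSg0 : 0 ≤ Sg := by
      have : max (-g 0) 0 ≤ Sg :=
        le_csSup (hbddg s hs.2) (Set.mem_image_of_mem _ h0s)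
      simp [hg0] at this; linarith [this]
    have hmemst : ∀ u ∈ Set.Icc (0 : ℝ≥0) s, u ∈ Set.Icc (0 : ℝ≥0) t :=
      fun u hu => ⟨hu.1, hu.2.trans hs.2⟩
    have hfg : Sf ≤ Sg + M := by
      apply Real.sSup_le
      · rintro x ⟨u, hu, rfl⟩
        have h1 : max (-g u) 0 ≤ Sg :=
          le_csSup (hbddg s hs.2) (Set.mem_image_of_mem _ hu)
        have h2 : |f u - g u| ≤ M := hMem u (hmemst u hu)
        have h3 : -f u ≤ -g u + |f u - g u| := by
          have := neg_abs_le (f u - g u); linarith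
        have h4 : -g u ≤ max (-g u) 0 := le_max_left _ _
        have h5 : (0:ℝ) ≤ Sg + M := by linarith
        exact max_le (by linarith) h5
      · linarith
    have hgf : Sg ≤ Sf + M := by
      apply Real.sSup_le
      · rintro x ⟨u, hu, rfl⟩
        have h1 : max (-f u) 0 ≤ Sf :=
          le_csSup (hbddf s hs.2) (Set.mem_image_of_mem _ hu)
        have h2 : |f u - g u| ≤ M := hMem u (hmemst u hu)
        have h3 : -g u ≤ -f u + |f u - g u| := by
          have := le_abs_self (f u - g u); linarith
        have h4 : -f u ≤ max (-f u) 0 := le_max_left _ _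
        have h5 : (0:ℝ) ≤ Sf + M := by linarith
        exact max_le (by linarith) h5
      · linarith
    have h2 : |f s - g s| ≤ M := hMem s hs
    have habs : |Sf - Sg| ≤ M := abs_sub_le_iff.2 ⟨by linarith, by linarith⟩
    have : skorohodReflection f s - skorohodReflection g s = (f s - g s) + (Sf - Sg) := by
      simp only [skorohodReflection, ← hSf, ← hSg]; ring
    rw [this]
    calc |(f s - g s) + (Sf - Sg)| ≤ |f s - g s| + |Sf - Sg| := abs_add_le _ _
      _ ≤ M + M := add_le_add h2 habs
      _ = 2 * M := by ring
  apply Real.sSup_le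
  · rintro x ⟨s, hs, rfl⟩
    exact key s hs
  · linarith
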